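/- Let b be a behavior with a sequential witness μ, let d be a deq(NULL) event of b, and let b' be the behavior obtained by removing d from b. Then the restriction of μ to the dequeue events of b' is a sequential witness for b'. -/

import Mathlib

inductive QAction : Type
  | enq : ℕ → QAction
  | deq : Option ℕ → QAction
  deriving DecidableEq

structure QEvent : Type where
  uid : ℕ
  act : QAction
  deriving DecidableEq

def QEvent.isEnq : QEvent → Bool
  | ⟨_, QAction.enq _⟩ => true
  | _ => false

def QEvent.isDeq : QEvent → Bool
  | ⟨_, QAction.deq _⟩ => true
  | _ => false

abbrev Behavior := List QEvent

/-- One step of the queue LTS. -/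
inductive QStep : List ℕ → QAction → List ℕ → Prop
  | enq (q : List ℕ) (x : ℕ) : QStep q (QAction.enq x) (q ++ [x])
  | deq (x : ℕ) (q : List ℕ) : QStep (x :: q) (QAction.deq (some x)) q
  | deqNull : QStep [] (QAction.deq none) []

/-- A behavior is the trace of a run of the queue LTS from the given state. -/
inductive LegalFrom : List ℕ → Behavior → Prop
  | nil (q : List ℕ) : LegalFrom q []
  | cons {q q' : List ℕ} {a : QAction} {rest : Behavior} (u : ℕ) :
      QStep q a q' → LegalFrom q' rest → LegalFrom q (⟨u, a⟩ :: rest)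

/-- A behavior is legal if it is the trace of a run of the queue LTS from ε. -/
def Legal (b : Behavior) : Prop := LegalFrom [] b

/-- `e` occurs strictly before `e'` in `b`. -/
def Precedes (b : Behavior) (e e' : QEvent) : Prop :=
  ∃ i j : ℕ, i < j ∧ b[i]? = some e ∧ b[j]? = some e'

/-- Observational equivalence: same subsequence of enqueue events and of dequeue events. -/
def ObsEquiv (b1 b2 : Behavior) : Prop :=
  b1.filter QEvent.isEnq = b2.filter QEvent.isEnq ∧
  b1.filter QEvent.isDeq = b2.filter QEvent.isDeq

/-- Sequences consisting only of enqueue events. -/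
inductive EnqStar : Behavior → Prop
  | nil : EnqStar []
  | cons (u x : ℕ) {rest : Behavior} : EnqStar rest → EnqStar (⟨u, QAction.enq x⟩ :: rest)

/-- Canonical behaviors: the language ((deq NULL)* · enq(x)·deq(x))* · (deq NULL)* · (enq(x))*. -/
inductive Canonical : Behavior → Prop
  | tail {rest : Behavior} : EnqStar rest → Canonical rest
  | deqNull (u : ℕ) {rest : Behavior} :
      Canonical rest → Canonical (⟨u, QAction.deq none⟩ :: rest)
  | pair (u v x : ℕ) {rest : Behavior} :
      Canonical rest → Canonical (⟨u, QAction.enq x⟩ :: ⟨v, QAction.deq (some x)⟩ :: rest)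

/-- `e` enqueues the same (non-NULL) value that `d` dequeues. -/
def SameVal (e d : QEvent) : Prop :=
  ∃ x, e.act = QAction.enq x ∧ d.act = QAction.deq (some x)

/-- A sequential witness for a behavior `b`. -/
structure SeqWitness (b : Behavior) (μ : QEvent → Option QEvent) : Prop where
  codom : ∀ d ∈ b, d.isDeq = true → ∀ e, μ d = some e → e ∈ b ∧ e.isEnq = true
  val : ∀ d ∈ b, d.isDeq = true → ∀ e, μ d = some e → SameVal e d
  null : ∀ d ∈ b, d.isDeq = true → (μ d = none ↔ d.act = QAction.deq none)
  inj : ∀ d ∈ b, ∀ d' ∈ b, d.isDeq = true → d'.isDeq = true →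
        ∀ e, μ d = some e → μ d' = some e → d = d'
  order : ∀ d ∈ b, d.isDeq = true → ∀ e, μ d = some e → Precedes b e d
  fifo : ∀ e ∈ b, e.isEnq = true → ∀ d' ∈ b, d'.isDeq = true → ∀ e',
         μ d' = some e' → Precedes b e e' →
         ∃ d ∈ b, d.isDeq = true ∧ μ d = some e ∧ Precedes b d d'
  empty : ∀ d ∈ b, d.isDeq = true → μ d = none →
          {e : QEvent | e ∈ b ∧ e.isEnq = true ∧ Precedes b e d}.ncard =
          {d' : QEvent | d' ∈ b ∧ d'.isDeq = true ∧ Precedes b d' d ∧ μ d' ≠ none}.ncard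


lemma ne_of_isEnq_of_deqNull {e d : QEvent} (he : e.isEnq = true)
    (hd : d.act = QAction.deq none) : e ≠ d := by
  intro h; subst h
  cases e with
  | mk u a => cases a <;> simp_all [QEvent.isEnq]

lemma precedes_erase_iff (b : Behavior) (hnd : b.Nodup) (d : QEvent) (hd : d ∈ b)
    {e e' : QEvent} (he : e ∈ b.erase d) (he' : e' ∈ b.erase d) :
    Precedes (b.erase d) e e' ↔ Precedes b e e' := by
  obtain ⟨s, t, rfl⟩ := List.append_of_mem hd
  have hmid := (List.nodup_middle).mp hnd
  have hdnot : d ∉ s ++ t := (List.nodup_cons.mp hmid).1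
  have hds : d ∉ s := fun h => hdnot (List.mem_append.mpr (Or.inl h))
  have herase : (s ++ d :: t).erase d = s ++ t := by
    rw [List.erase_append_right _ hds, List.erase_cons_head]
  rw [herase] at he he'
  have hed : e ≠ d := fun h => hdnot (h ▸ he)
  have he'd : e' ≠ d := fun h => hdnot (h ▸ he')
  rw [herase]
  constructor
  · rintro ⟨i, j, hij, hi, hj⟩
    refine ⟨if i < s.length then i else i + 1, if j < s.length then j else j + 1,
      ?_, ?_, ?_⟩
    · split <;> split <;> omega
    · by_cases h : i < s.length
      · rw [if_pos h, List.getElem?_append_left h]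
        rw [List.getElem?_append_left h] at hi; exact hi
      · push_neg at h
        rw [List.getElem?_append_right h] at hi
        rw [if_neg (by omega), List.getElem?_append_right (by omega : s.length ≤ i + 1)]
        have : i + 1 - s.length = (i - s.length) + 1 := by omega
        rw [this, List.getElem?_cons_succ]; exact hi
    · by_cases h : j < s.length
      · rw [if_pos h, List.getElem?_append_left h]
        rw [List.getElem?_append_left h] at hj; exact hj
      · push_neg at h
        rw [List.getElem?_append_right h] at hj
        rw [if_neg (by omega), List.getElem?_append_right (by omega : s.length ≤ j + 1)]
        have : j + 1 - s.length = (j - s.length) + 1 := by omega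
        rw [this, List.getElem?_cons_succ]; exact hj
  · rintro ⟨i, j, hij, hi, hj⟩
    have hmidval : (s ++ d :: t)[s.length]? = some d := by
      rw [List.getElem?_append_right (le_refl _)]
      simp
    have hine : i ≠ s.length := by
      intro h; rw [h, hmidval] at hi; exact hed (Option.some.inj hi).symm
    have hjne : j ≠ s.length := by
      intro h; rw [h, hmidval] at hj; exact he'd (Option.some.inj hj).symm
    refine ⟨if i < s.length then i else i - 1, if j < s.length then j else j - 1,
      ?_, ?_, ?_⟩
    · split <;> split <;> omega
    · by_cases h : i < s.length
      · rw [if_pos h, List.getElem?_append_left h]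
        rw [List.getElem?_append_left h] at hi; exact hi
      · push_neg at h
        have h' : s.length < i := by omega
        rw [List.getElem?_append_right h] at hi
        have : i - s.length = (i - 1 - s.length) + 1 := by omega
        rw [this, List.getElem?_cons_succ] at hi
        rw [if_neg (by omega), List.getElem?_append_right (by omega : s.length ≤ i - 1)]
        exact hi
    · by_cases h : j < s.length
      · rw [if_pos h, List.getElem?_append_left h]
        rw [List.getElem?_append_left h] at hj; exact hj
      · push_neg at h
        have h' : s.length < j := by omega
        rw [List.getElem?_append_right h] at hj
        have : j - s.length = (j - 1 - s.length) + 1 := by omega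
        rw [this, List.getElem?_cons_succ] at hj
        rw [if_neg (by omega), List.getElem?_append_right (by omega : s.length ≤ j - 1)]
        exact hj

/-- Removing a deq(NULL) event preserves the sequential witness (restricted to
the remaining dequeues). -/
theorem seqWitness_remove_deqNull (b : Behavior) (μ : QEvent → Option QEvent)
    (hnd : b.Nodup) (hw : SeqWitness b μ) (d : QEvent)
    (hd : d ∈ b) (hact : d.act = QAction.deq none) :
    SeqWitness (b.erase d) μ := by
  constructor
  case codom =>
    intro d' hd' hdq e hμ
    have hd'b := List.mem_of_mem_erase hd'
    obtain ⟨heb, hee⟩ := hw.codom d' hd'b hdq e hμ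
    exact ⟨(List.mem_erase_of_ne (ne_of_isEnq_of_deqNull hee hact)).mpr heb, hee⟩
  case val =>
    intro d' hd' hdq e hμ
    exact hw.val d' (List.mem_of_mem_erase hd') hdq e hμ
  case null =>
    intro d' hd' hdq
    exact hw.null d' (List.mem_of_mem_erase hd') hdq
  case inj =>
    intro d1 hd1 d2 hd2 h1 h2 e hμ1 hμ2
    exact hw.inj d1 (List.mem_of_mem_erase hd1) d2 (List.mem_of_mem_erase hd2)
      h1 h2 e hμ1 hμ2
  case order =>
    intro d' hd' hdq e hμ
    have hd'b := List.mem_of_mem_erase hd'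
    obtain ⟨heb, hee⟩ := hw.codom d' hd'b hdq e hμ
    have he : e ∈ b.erase d :=
      (List.mem_erase_of_ne (ne_of_isEnq_of_deqNull hee hact)).mpr heb
    exact (precedes_erase_iff b hnd d hd he hd').mpr
      (hw.order d' hd'b hdq e hμ)
  case fifo =>
    intro e he hee d' hd' hdq e' hμ hprec
    have heb := List.mem_of_mem_erase he
    have hd'b := List.mem_of_mem_erase hd'
    obtain ⟨he'b, he'e⟩ := hw.codom d' hd'b hdq e' hμ
    have he'er : e' ∈ b.erase d :=
      (List.mem_erase_of_ne (ne_of_isEnq_of_deqNull he'e hact)).mpr he'b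
    have hprecb := (precedes_erase_iff b hnd d hd he he'er).mp hprec
    obtain ⟨d0, hd0b, hd0q, hd0μ, hd0prec⟩ :=
      hw.fifo e heb hee d' hd'b hdq e' hμ hprecb
    have hddq : d.isDeq = true := by
      cases d with | mk u a => cases a <;> simp_all [QEvent.isDeq]
    have hμd : μ d = none := (hw.null d hd hddq).mpr hact
    have hd0ne : d0 ≠ d := by
      intro h; rw [h, hμd] at hd0μ; exact Option.some_ne_none _ hd0μ.symm
    have hd0er : d0 ∈ b.erase d := (List.mem_erase_of_ne hd0ne).mpr hd0b
    exact ⟨d0, hd0er, hd0q,  hd0μ,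
      (precedes_erase_iff b hnd d hd hd0er hd').mpr hd0prec⟩
  case empty =>
    intro d'' hd'' hdq hμn
    have hd''b := List.mem_of_mem_erase hd''
    have hddq : d.isDeq = true := by
      cases d with | mk u a => cases a <;> simp_all [QEvent.isDeq]
    have hμd : μ d = none := (hw.null d hd hddq).mpr hact
    have h1 : {e : QEvent | e ∈ b.erase d ∧ e.isEnq = true ∧ Precedes (b.erase d) e d''}
        = {e : QEvent | e ∈ b ∧ e.isEnq = true ∧ Precedes b e d''} := by
      ext e
      simp only [Set.mem_setOf_eq]
      constructor
      · rintro ⟨hm, hq, hp⟩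
        exact ⟨List.mem_of_mem_erase hm, hq,
          (precedes_erase_iff b hnd d hd hm hd'').mp hp⟩
      · rintro ⟨hm, hq, hp⟩
        have hm' : e ∈ b.erase d :=
          (List.mem_erase_of_ne (ne_of_isEnq_of_deqNull hq hact)).mpr hm
        exact ⟨hm', hq, (precedes_erase_iff b hnd d hd hm' hd'').mpr hp⟩
    have h2 : {d' : QEvent | d' ∈ b.erase d ∧ d'.isDeq = true ∧
          Precedes (b.erase d) d' d'' ∧ μ d' ≠ none}
        = {d' : QEvent | d' ∈ b ∧ d'.isDeq = true ∧ Precedes b d' d'' ∧ μ d' ≠ none} := by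
      ext d'
      simp only [Set.mem_setOf_eq]
      constructor
      · rintro ⟨hm, hq, hp, hn⟩
        exact ⟨List.mem_of_mem_erase hm, hq,
          (precedes_erase_iff b hnd d hd hm hd'').mp hp, hn⟩
      · rintro ⟨hm, hq, hp, hn⟩
        have hne : d' ≠ d := fun h => hn (h ▸ hμd)
        have hm' : d' ∈ b.erase d := (List.mem_erase_of_ne hne).mpr hm
        exact ⟨hm', hq, (precedes_erase_iff b hnd d hd hm' hd'').mpr hp, hn⟩
    rw [h1, h2]
    exact hw.empty d'' hd''b hdq hμn
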